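/- The randomized online algorithm RankingSimulate achieves expected second-price-matching profit at least (1/2)·OPT_{2P}·(1 − e^{−1/2} + o(1)) on any Second-Price Matching instance in which every keyword has degree at least 2, where OPT_{2P} is the optimal offline second-price matching value; hence its competitive ratio is at most 2√e/(√e − 1) ≈ 5.083. -/

import Mathlib

/-- A second-price matching (2PM): keywords `Fin m` arrive in index order;
`S` is the set of matched keywords, `g u` the bidder matched to `u` and `w u`
the second-price bidder, both adjacent to `u` and unmatched at `u`'s arrival. -/
def IsSecondPriceMatching {m : ℕ} {B : Type*} (A : Fin m → B → Prop)
    (S : Finset (Fin m)) (g w : Fin m → B) : Prop :=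
  (∀ u ∈ S, A u (g u) ∧ A u (w u) ∧ g u ≠ w u) ∧
  (∀ u ∈ S, ∀ u' ∈ S, u ≠ u' → g u ≠ g u') ∧
  (∀ u ∈ S, ∀ u' ∈ S, u' < u → g u' ≠ g u ∧ g u' ≠ w u)

/-- The state `(M, R, profit)` of RankingSimulate after the first `t` keywords:
`M` are matched bidders, `R` reserved bidders, and the profit counts keywords matched
to a bidder while some other adjacent bidder was still unmatched. -/
noncomputable def simStateP (m : ℕ) {V : Type*} [Fintype V] [DecidableEq V]
    (A : Fin m → V → Prop) [∀ t v, Decidable (A t v)] (rk : V → ℕ)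
    (r : Fin m → Bool) : ℕ → Finset V × Finset V × ℕ
  | 0 => (∅, ∅, 0)
  | t + 1 =>
    let s := simStateP m A rk r t
    if h : t < m then
      let u : Fin m := ⟨t, h⟩
      let gain : V → ℕ := fun vm =>
        if ∃ v' : V, v' ≠ vm ∧ A u v' ∧ v' ∉ s.1 then 1 else 0
      let N := Finset.univ.filter fun v => A u v ∧ v ∉ s.1 ∧ v ∉ s.2.1
      if hne : N.Nonempty then
        let v1 := Function.argminOn rk ↑N (Finset.coe_nonempty.mpr hne)
        let N2 := N.erase v1
        if hne2 : N2.Nonempty then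
          let v2 := Function.argminOn rk ↑N2 (Finset.coe_nonempty.mpr hne2)
          if r u then (insert v1 s.1, insert v2 s.2.1, s.2.2 + gain v1)
          else (insert v2 s.1, insert v1 s.2.1, s.2.2 + gain v2)
        else
          if r u then (insert v1 s.1, s.2.1, s.2.2 + gain v1)
          else (s.1, insert v1 s.2.1, s.2.2)
      else s
    else s

section SPM
variable {m nV : ℕ} (A : Fin m → Fin nV → Prop) [∀ t v, Decidable (A t v)] (rk : Fin nV → ℕ)

noncomputable def stStep (gain : Fin nV → ℕ) (b : Bool)
    (s : Finset (Fin nV) × Finset (Fin nV) × ℕ) (N : Finset (Fin nV)) :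
    Finset (Fin nV) × Finset (Fin nV) × ℕ :=
  if hne : N.Nonempty then
    let v1 := Function.argminOn rk ↑N (Finset.coe_nonempty.mpr hne)
    if hne2 : (N.erase v1).Nonempty then
      let v2 := Function.argminOn rk ↑(N.erase v1) (Finset.coe_nonempty.mpr hne2)
      if b then (insert v1 s.1, insert v2 s.2.1, s.2.2 + gain v1)
      else (insert v2 s.1, insert v1 s.2.1, s.2.2 + gain v2)
    else
      if b then (insert v1 s.1, s.2.1, s.2.2 + gain v1)
      else (s.1, insert v1 s.2.1, s.2.2)
  else s

noncomputable def detStep (d : Finset (Fin nV) × ℕ × ℕ) (N : Finset (Fin nV)) :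
    Finset (Fin nV) × ℕ × ℕ :=
  if hne : N.Nonempty then
    let v1 := Function.argminOn rk ↑N (Finset.coe_nonempty.mpr hne)
    if hne2 : (N.erase v1).Nonempty then
      (insert v1 (insert (Function.argminOn rk ↑(N.erase v1)
        (Finset.coe_nonempty.mpr hne2)) d.1), d.2.1 + 1, d.2.2)
    else (insert v1 d.1, d.2.1, d.2.2 + 1)
  else d

noncomputable def detS : ℕ → Finset (Fin nV) × ℕ × ℕ
  | 0 => (∅, 0, 0)
  | t + 1 =>
    if h : t < m then
      detStep rk (detS t)
        (Finset.univ.filter fun v => A ⟨t, h⟩ v ∧ v ∉ (detS t).1)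
    else detS t

lemma detS_succ_pos (t : ℕ) (h : t < m) : detS A rk (t + 1) =
    detStep rk (detS A rk t)
      (Finset.univ.filter fun v => A ⟨t, h⟩ v ∧ v ∉ (detS A rk t).1) := by
  rw [detS, dif_pos h]

lemma detS_succ_neg (t : ℕ) (h : ¬ t < m) : detS A rk (t + 1) = detS A rk t := by
  rw [detS, dif_neg h]

lemma st_succ_pos (r : Fin m → Bool) (t : ℕ) (h : t < m) :
    simStateP m A rk r (t + 1) = stStep rk
      (fun vm => if ∃ v' : Fin nV, v' ≠ vm ∧ A ⟨t, h⟩ v' ∧ v' ∉ (simStateP m A rk r t).1 then 1 else 0)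
      (r ⟨t, h⟩) (simStateP m A rk r t)
      (Finset.univ.filter fun v => A ⟨t, h⟩ v ∧ v ∉ (simStateP m A rk r t).1 ∧
        v ∉ (simStateP m A rk r t).2.1) := by
  rw [simStateP, dif_pos h]; simp only [stStep]; congr!

lemma st_succ_neg (r : Fin m → Bool) (t : ℕ) (h : ¬ t < m) :
    simStateP m A rk r (t + 1) = simStateP m A rk r t := by
  rw [simStateP, dif_neg h]

/-- the master case analysis on a step with available set `N` -/
lemma step_cases (N : Finset (Fin nV)) :
    (N = ∅ ∧ ∀ gain (b : Bool) s d, stStep rk gain b s N = s ∧ detStep rk d N = d)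
  ∨ (∃ v1, N = {v1} ∧ ∀ gain (b : Bool) s d,
        detStep rk d N = (insert v1 d.1, d.2.1, d.2.2 + 1) ∧
        (b = true → stStep rk gain b s N = (insert v1 s.1, s.2.1, s.2.2 + gain v1)) ∧
        (b = false → stStep rk gain b s N = (s.1, insert v1 s.2.1, s.2.2)))
  ∨ (∃ v1 v2, v1 ≠ v2 ∧ v1 ∈ N ∧ v2 ∈ N ∧ ∀ gain (b : Bool) s d,
        detStep rk d N = (insert v1 (insert v2 d.1), d.2.1 + 1, d.2.2) ∧
        (b = true → stStep rk gain b s N = (insert v1 s.1, insert v2 s.2.1, s.2.2 + gain v1)) ∧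
        (b = false → stStep rk gain b s N = (insert v2 s.1, insert v1 s.2.1, s.2.2 + gain v2))) := by
  by_cases hne : N.Nonempty
  · set v1 := Function.argminOn rk ↑N (Finset.coe_nonempty.mpr hne) with hv1
    have hv1N : v1 ∈ N := Function.argminOn_mem _ _ _
    by_cases hne2 : (N.erase v1).Nonempty
    · right; right
      set v2 := Function.argminOn rk ↑(N.erase v1)
        (Finset.coe_nonempty.mpr hne2) with hv2
      have hv2N : v2 ∈ N.erase v1 := Function.argminOn_mem _ _ _
      refine ⟨v1, v2, Ne.symm (Finset.mem_erase.mp hv2N).1, hv1N,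
        (Finset.mem_erase.mp hv2N).2, ?_⟩
      intro gain b s d
      refine ⟨?_, ?_, ?_⟩
      · simp only [detStep, dif_pos hne, ← hv1, dif_pos hne2, ← hv2]
      · intro hb; simp only [stStep, dif_pos hne, ← hv1, dif_pos hne2, ← hv2, hb, if_true]
      · intro hb; simp only [stStep, dif_pos hne, ← hv1, dif_pos hne2, ← hv2, hb, Bool.false_eq_true,
          if_false]
    · right; left
      have hsing : N = {v1} := by
        apply Finset.eq_singleton_iff_unique_mem.mpr
        refine ⟨hv1N, fun x hx => ?_⟩
        by_contra hxv
        exact hne2 ⟨x, Finset.mem_erase.mpr ⟨hxv, hx⟩⟩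
      refine ⟨v1, hsing, ?_⟩
      intro gain b s d
      refine ⟨?_, ?_, ?_⟩
      · simp only [detStep, dif_pos hne, ← hv1, dif_neg hne2]
      · intro hb; simp only [stStep, dif_pos hne, ← hv1, dif_neg hne2, hb, if_true]
      · intro hb; simp only [stStep, dif_pos hne, ← hv1, dif_neg hne2, hb, Bool.false_eq_true,
          if_false]
  · left
    refine ⟨Finset.not_nonempty_iff_eq_empty.mp hne, fun gain b s d => ?_⟩
    exact ⟨by simp only [stStep, dif_neg hne], by simp only [detStep, dif_neg hne]⟩


lemma L_union (r : Fin m → Bool) : ∀ t : ℕ,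
    (simStateP m A rk r t).1 ∪ (simStateP m A rk r t).2.1 = (detS A rk t).1 := by
  intro t
  induction t with
  | zero => rw [simStateP, detS]; simp
  | succ t ih =>
    by_cases h : t < m
    · have hN : (Finset.univ.filter fun v => A ⟨t, h⟩ v ∧ v ∉ (simStateP m A rk r t).1 ∧
          v ∉ (simStateP m A rk r t).2.1) =
          (Finset.univ.filter fun v => A ⟨t, h⟩ v ∧ v ∉ (detS A rk t).1) := by
        ext v
        have hv : v ∈ (simStateP m A rk r t).1 ∪ (simStateP m A rk r t).2.1 ↔
            v ∈ (detS A rk t).1 := by rw [ih]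
        simp only [Finset.mem_union] at hv
        simp only [Finset.mem_filter]
        tauto
      rw [st_succ_pos A rk r t h, detS_succ_pos A rk t h, hN]
      rcases step_cases rk (Finset.univ.filter fun v => A ⟨t, h⟩ v ∧ v ∉ (detS A rk t).1) with
        ⟨-, hstep⟩ | ⟨v1, -, hstep⟩ | ⟨v1, v2, -, -, -, hstep⟩
      · rcases hstep (fun vm => if ∃ v' : Fin nV, v' ≠ vm ∧ A ⟨t, h⟩ v' ∧
            v' ∉ (simStateP m A rk r t).1 then 1 else 0) (r ⟨t, h⟩) (simStateP m A rk r t)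
            (detS A rk t) with ⟨h1, h2⟩
        rw [h1, h2, ih]
      · rcases hstep (fun vm => if ∃ v' : Fin nV, v' ≠ vm ∧ A ⟨t, h⟩ v' ∧
            v' ∉ (simStateP m A rk r t).1 then 1 else 0) (r ⟨t, h⟩) (simStateP m A rk r t)
            (detS A rk t) with ⟨h1, h2, h3⟩
        rw [h1]
        rcases Bool.dichotomy (r ⟨t, h⟩) with hb | hb
        · rw [h3 hb]; simp only [Finset.union_insert, ih]
        · rw [h2 hb]; simp only [Finset.insert_union, ih]
      · rcases hstep (fun vm => if ∃ v' : Fin nV, v' ≠ vm ∧ A ⟨t, h⟩ v' ∧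
            v' ∉ (simStateP m A rk r t).1 then 1 else 0) (r ⟨t, h⟩) (simStateP m A rk r t)
            (detS A rk t) with ⟨h1, h2, h3⟩
        rw [h1]
        rcases Bool.dichotomy (r ⟨t, h⟩) with hb | hb
        · rw [h3 hb]
          ext x
          have hx : (x ∈ (simStateP m A rk r t).1 ∨ x ∈ (simStateP m A rk r t).2.1) ↔
              x ∈ (detS A rk t).1 := by rw [← Finset.mem_union, ih]
          simp only [Finset.mem_union, Finset.mem_insert]
          tauto
        · rw [h2 hb]
          ext x
          have hx : (x ∈ (simStateP m A rk r t).1 ∨ x ∈ (simStateP m A rk r t).2.1) ↔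
              x ∈ (detS A rk t).1 := by rw [← Finset.mem_union, ih]
          simp only [Finset.mem_union, Finset.mem_insert]
          tauto
    · rw [st_succ_neg A rk r t h, detS_succ_neg A rk t h, ih]

/-- the filter sets agree -/
lemma L_filter (r : Fin m → Bool) (t : ℕ) (h : t < m) :
    (Finset.univ.filter fun v => A ⟨t, h⟩ v ∧ v ∉ (simStateP m A rk r t).1 ∧
        v ∉ (simStateP m A rk r t).2.1) =
    (Finset.univ.filter fun v => A ⟨t, h⟩ v ∧ v ∉ (detS A rk t).1) := by
  ext v
  have hv : v ∈ (simStateP m A rk r t).1 ∪ (simStateP m A rk r t).2.1 ↔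
      v ∈ (detS A rk t).1 := by rw [L_union]
  simp only [Finset.mem_union] at hv
  simp only [Finset.mem_filter]
  tauto


noncomputable def Ndet (t : ℕ) (h : t < m) : Finset (Fin nV) :=
  Finset.univ.filter fun v => A ⟨t, h⟩ v ∧ v ∉ (detS A rk t).1

lemma mem_Ndet {t : ℕ} {h : t < m} {v : Fin nV} :
    v ∈ Ndet A rk t h ↔ A ⟨t, h⟩ v ∧ v ∉ (detS A rk t).1 := by
  simp [Ndet]

lemma detS_succ_pos' (t : ℕ) (h : t < m) :
    detS A rk (t + 1) = detStep rk (detS A rk t) (Ndet A rk t h) :=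
  detS_succ_pos A rk t h

lemma st_succ_pos' (r : Fin m → Bool) (t : ℕ) (h : t < m) :
    simStateP m A rk r (t + 1) = stStep rk
      (fun vm => if ∃ v' : Fin nV, v' ≠ vm ∧ A ⟨t, h⟩ v' ∧ v' ∉ (simStateP m A rk r t).1 then 1 else 0)
      (r ⟨t, h⟩) (simStateP m A rk r t) (Ndet A rk t h) := by
  rw [st_succ_pos A rk r t h, L_filter]; rfl

lemma not_mem_st_of_not_mem_det {r : Fin m → Bool} {t : ℕ} {v : Fin nV}
    (hv : v ∉ (detS A rk t).1) :
    v ∉ (simStateP m A rk r t).1 ∧ v ∉ (simStateP m A rk r t).2.1 := by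
  have h := L_union A rk r t
  constructor <;> intro hmem <;> exact hv (h ▸ Finset.mem_union.mpr (by tauto))

lemma L_disj (r : Fin m → Bool) : ∀ t : ℕ,
    Disjoint (simStateP m A rk r t).1 (simStateP m A rk r t).2.1 := by
  intro t
  induction t with
  | zero => rw [simStateP]; simp
  | succ t ih =>
    by_cases h : t < m
    · rw [st_succ_pos' A rk r t h]
      rcases step_cases rk (Ndet A rk t h) with ⟨hN0, hstep⟩ | ⟨v1, hN1, hstep⟩ |
        ⟨v1, v2, hv12, hv1N, hv2N, hstep⟩
      · rw [(hstep (fun vm => if ∃ v' : Fin nV, v' ≠ vm ∧ A ⟨t, h⟩ v' ∧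
          v' ∉ (simStateP m A rk r t).1 then 1 else 0) (r ⟨t, h⟩) (simStateP m A rk r t)
          (detS A rk t)).1]
        exact ih
      · obtain ⟨hd, h2, h3⟩ := hstep (fun vm => if ∃ v' : Fin nV, v' ≠ vm ∧ A ⟨t, h⟩ v' ∧
          v' ∉ (simStateP m A rk r t).1 then 1 else 0) (r ⟨t, h⟩) (simStateP m A rk r t)
          (detS A rk t)
        have hv1 : v1 ∈ Ndet A rk t h := by rw [hN1]; exact Finset.mem_singleton_self v1
        obtain ⟨hm1, hm2⟩ := not_mem_st_of_not_mem_det A rk (r := r) (mem_Ndet A rk |>.mp hv1).2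
        rcases Bool.dichotomy (r ⟨t, h⟩) with hb | hb
        · rw [h3 hb]
          exact Finset.disjoint_insert_right.mpr ⟨hm1, ih⟩
        · rw [h2 hb]
          exact Finset.disjoint_insert_left.mpr ⟨hm2, ih⟩
      · obtain ⟨hd, h2, h3⟩ := hstep (fun vm => if ∃ v' : Fin nV, v' ≠ vm ∧ A ⟨t, h⟩ v' ∧
          v' ∉ (simStateP m A rk r t).1 then 1 else 0) (r ⟨t, h⟩) (simStateP m A rk r t)
          (detS A rk t)
        obtain ⟨hm11, hm12⟩ := not_mem_st_of_not_mem_det A rk (r := r) (mem_Ndet A rk |>.mp hv1N).2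
        obtain ⟨hm21, hm22⟩ := not_mem_st_of_not_mem_det A rk (r := r) (mem_Ndet A rk |>.mp hv2N).2
        rcases Bool.dichotomy (r ⟨t, h⟩) with hb | hb
        · rw [h3 hb, Finset.disjoint_insert_left, Finset.disjoint_insert_right]
          exact ⟨by simp [hm22, hv12.symm], hm11, ih⟩
        · rw [h2 hb, Finset.disjoint_insert_left, Finset.disjoint_insert_right]
          exact ⟨by simp [hm12, hv12], hm21, ih⟩
    · rw [st_succ_neg A rk r t h]; exact ih

lemma L_Rmono (r : Fin m → Bool) (t : ℕ) :
    (simStateP m A rk r t).2.1 ⊆ (simStateP m A rk r (t + 1)).2.1 := by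
  by_cases h : t < m
  · rw [st_succ_pos' A rk r t h]
    rcases step_cases rk (Ndet A rk t h) with ⟨hN0, hstep⟩ | ⟨v1, hN1, hstep⟩ |
      ⟨v1, v2, hv12, hv1N, hv2N, hstep⟩
    · rw [(hstep (fun vm => if ∃ v' : Fin nV, v' ≠ vm ∧ A ⟨t, h⟩ v' ∧
        v' ∉ (simStateP m A rk r t).1 then 1 else 0) (r ⟨t, h⟩) (simStateP m A rk r t)
        (detS A rk t)).1]
    · obtain ⟨hd, h2, h3⟩ := hstep (fun vm => if ∃ v' : Fin nV, v' ≠ vm ∧ A ⟨t, h⟩ v' ∧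
        v' ∉ (simStateP m A rk r t).1 then 1 else 0) (r ⟨t, h⟩) (simStateP m A rk r t)
        (detS A rk t)
      rcases Bool.dichotomy (r ⟨t, h⟩) with hb | hb
      · rw [h3 hb]; exact Finset.subset_insert _ _
      · rw [h2 hb]
    · obtain ⟨hd, h2, h3⟩ := hstep (fun vm => if ∃ v' : Fin nV, v' ≠ vm ∧ A ⟨t, h⟩ v' ∧
        v' ∉ (simStateP m A rk r t).1 then 1 else 0) (r ⟨t, h⟩) (simStateP m A rk r t)
        (detS A rk t)
      rcases Bool.dichotomy (r ⟨t, h⟩) with hb | hb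
      · rw [h3 hb]; exact Finset.subset_insert _ _
      · rw [h2 hb]; exact Finset.subset_insert _ _
  · rw [st_succ_neg A rk r t h]

lemma L_Rmono' (r : Fin m → Bool) {s t : ℕ} (hst : s ≤ t) :
    (simStateP m A rk r s).2.1 ⊆ (simStateP m A rk r t).2.1 := by
  induction t with
  | zero => obtain rfl := Nat.le_zero.mp hst; exact subset_rfl
  | succ t ih =>
    rcases Nat.lt_succ_iff_lt_or_eq.mp (Nat.lt_succ_of_le hst) with h | h
    · exact (ih (Nat.lt_succ_iff.mp h)).trans (L_Rmono A rk r t)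
    · subst h; exact subset_rfl

lemma L_profit_mono (r : Fin m → Bool) (t : ℕ) :
    (simStateP m A rk r t).2.2 ≤ (simStateP m A rk r (t + 1)).2.2 := by
  by_cases h : t < m
  · rw [st_succ_pos' A rk r t h]
    rcases step_cases rk (Ndet A rk t h) with ⟨hN0, hstep⟩ | ⟨v1, hN1, hstep⟩ |
      ⟨v1, v2, hv12, hv1N, hv2N, hstep⟩
    · rw [(hstep (fun vm => if ∃ v' : Fin nV, v' ≠ vm ∧ A ⟨t, h⟩ v' ∧
        v' ∉ (simStateP m A rk r t).1 then 1 else 0) (r ⟨t, h⟩) (simStateP m A rk r t)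
        (detS A rk t)).1]
    · obtain ⟨hd, h2, h3⟩ := hstep (fun vm => if ∃ v' : Fin nV, v' ≠ vm ∧ A ⟨t, h⟩ v' ∧
        v' ∉ (simStateP m A rk r t).1 then 1 else 0) (r ⟨t, h⟩) (simStateP m A rk r t)
        (detS A rk t)
      rcases Bool.dichotomy (r ⟨t, h⟩) with hb | hb
      · rw [h3 hb]
      · rw [h2 hb]; exact Nat.le_add_right _ _
    · obtain ⟨hd, h2, h3⟩ := hstep (fun vm => if ∃ v' : Fin nV, v' ≠ vm ∧ A ⟨t, h⟩ v' ∧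
        v' ∉ (simStateP m A rk r t).1 then 1 else 0) (r ⟨t, h⟩) (simStateP m A rk r t)
        (detS A rk t)
      rcases Bool.dichotomy (r ⟨t, h⟩) with hb | hb
      · rw [h3 hb]; exact Nat.le_add_right _ _
      · rw [h2 hb]; exact Nat.le_add_right _ _
  · rw [st_succ_neg A rk r t h]

lemma reserved_not_matched (r : Fin m → Bool) {e t : ℕ} (he : e + 1 ≤ t) {v : Fin nV}
    (hv : v ∈ (simStateP m A rk r (e + 1)).2.1) : v ∉ (simStateP m A rk r t).1 := by
  have hR : v ∈ (simStateP m A rk r t).2.1 := L_Rmono' A rk r he hv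
  exact fun hM => (L_disj A rk r t).forall_ne_finset hM hR rfl


/-- the counters move by (+1,0), (0,+1) or (0,0) -/
lemma counter_step (t : ℕ) :
    ((detS A rk (t+1)).2.1 = (detS A rk t).2.1 + 1 ∧ (detS A rk (t+1)).2.2 = (detS A rk t).2.2)
  ∨ ((detS A rk (t+1)).2.1 = (detS A rk t).2.1 ∧ (detS A rk (t+1)).2.2 = (detS A rk t).2.2 + 1)
  ∨ ((detS A rk (t+1)).2.1 = (detS A rk t).2.1 ∧ (detS A rk (t+1)).2.2 = (detS A rk t).2.2) := by
  by_cases h : t < m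
  · rw [detS_succ_pos' A rk t h]
    rcases step_cases rk (Ndet A rk t h) with ⟨hN0, hstep⟩ | ⟨v1, hN1, hstep⟩ |
      ⟨v1, v2, hv12, hv1N, hv2N, hstep⟩
    · rw [(hstep 0 true (∅, ∅, 0) (detS A rk t)).2]; right; right; exact ⟨rfl, rfl⟩
    · rw [(hstep 0 true (∅, ∅, 0) (detS A rk t)).1]; right; left; exact ⟨rfl, rfl⟩
    · rw [(hstep 0 true (∅, ∅, 0) (detS A rk t)).1]; left; exact ⟨rfl, rfl⟩
  · rw [detS_succ_neg A rk t h]; right; right; exact ⟨rfl, rfl⟩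

def isT1 (t : ℕ) : Prop := (detS A rk (t+1)).2.2 = (detS A rk t).2.2 + 1
def isT2 (t : ℕ) : Prop := (detS A rk (t+1)).2.1 = (detS A rk t).2.1 + 1

noncomputable instance : DecidablePred (isT1 A rk) := fun _ => Nat.decEq _ _
noncomputable instance : DecidablePred (isT2 A rk) := fun _ => Nat.decEq _ _

lemma not_isT1_and_isT2 (t : ℕ) : ¬ (isT1 A rk t ∧ isT2 A rk t) := by
  rintro ⟨h1, h2⟩
  rcases counter_step A rk t with ⟨ha, hb⟩ | ⟨ha, hb⟩ | ⟨ha, hb⟩ <;> rw [isT1] at h1 <;>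
    rw [isT2] at h2 <;> omega

lemma a_eq_of_not_isT2 {t : ℕ} (h : ¬ isT2 A rk t) :
    (detS A rk (t+1)).2.1 = (detS A rk t).2.1 := by
  rcases counter_step A rk t with ⟨ha, hb⟩ | ⟨ha, hb⟩ | ⟨ha, hb⟩ <;>
    first | exact ha | exact absurd ha h

lemma b_eq_of_not_isT1 {t : ℕ} (h : ¬ isT1 A rk t) :
    (detS A rk (t+1)).2.2 = (detS A rk t).2.2 := by
  rcases counter_step A rk t with ⟨ha, hb⟩ | ⟨ha, hb⟩ | ⟨ha, hb⟩ <;>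
    first | exact hb | exact absurd hb h

lemma L_cardU : ∀ t : ℕ, (detS A rk t).1.card ≤ 2 * (detS A rk t).2.1 + (detS A rk t).2.2 := by
  intro t
  induction t with
  | zero => rw [detS]; simp
  | succ t ih =>
    by_cases h : t < m
    · rw [detS_succ_pos' A rk t h]
      rcases step_cases rk (Ndet A rk t h) with ⟨hN0, hstep⟩ | ⟨v1, hN1, hstep⟩ |
        ⟨v1, v2, hv12, hv1N, hv2N, hstep⟩
      · rw [(hstep 0 true (∅, ∅, 0) (detS A rk t)).2]; exact ih
      · rw [(hstep 0 true (∅, ∅, 0) (detS A rk t)).1]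
        have := Finset.card_insert_le v1 (detS A rk t).1
        simp only []; omega
      · rw [(hstep 0 true (∅, ∅, 0) (detS A rk t)).1]
        have h1 := Finset.card_insert_le v1 (insert v2 (detS A rk t).1)
        have h2 := Finset.card_insert_le v2 (detS A rk t).1
        simp only []; omega
    · rw [detS_succ_neg A rk t h]; exact ih

lemma L_countT1 : ∀ n : ℕ, ((Finset.range n).filter (isT1 A rk)).card = (detS A rk n).2.2 := by
  intro n
  induction n with
  | zero => rw [detS]; simp
  | succ n ih =>
    rw [Finset.range_add_one, Finset.filter_insert]
    by_cases h1 : isT1 A rk n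
    · rw [if_pos h1, Finset.card_insert_of_notMem (fun hmem =>
        (Finset.mem_range.mp (Finset.mem_filter.mp hmem).1).false), ih]
      exact h1.symm
    · rw [if_neg h1, ih, b_eq_of_not_isT1 A rk h1]

lemma L_countT2 : ∀ n : ℕ, ((Finset.range n).filter (isT2 A rk)).card = (detS A rk n).2.1 := by
  intro n
  induction n with
  | zero => rw [detS]; simp
  | succ n ih =>
    rw [Finset.range_add_one, Finset.filter_insert]
    by_cases h2 : isT2 A rk n
    · rw [if_pos h2, Finset.card_insert_of_notMem (fun hmem =>
        (Finset.mem_range.mp (Finset.mem_filter.mp hmem).1).false), ih]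
      exact h2.symm
    · rw [if_neg h2, ih, a_eq_of_not_isT2 A rk h2]

lemma L_Umono (t : ℕ) : (detS A rk t).1 ⊆ (detS A rk (t+1)).1 := by
  by_cases h : t < m
  · rw [detS_succ_pos' A rk t h]
    rcases step_cases rk (Ndet A rk t h) with ⟨hN0, hstep⟩ | ⟨v1, hN1, hstep⟩ |
      ⟨v1, v2, hv12, hv1N, hv2N, hstep⟩
    · rw [(hstep 0 true (∅, ∅, 0) (detS A rk t)).2]
    · rw [(hstep 0 true (∅, ∅, 0) (detS A rk t)).1]; exact Finset.subset_insert _ _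
    · rw [(hstep 0 true (∅, ∅, 0) (detS A rk t)).1]
      exact (Finset.subset_insert _ _).trans (Finset.subset_insert _ _)
  · rw [detS_succ_neg A rk t h]

lemma L_Umono' {s t : ℕ} (hst : s ≤ t) : (detS A rk s).1 ⊆ (detS A rk t).1 := by
  induction t with
  | zero => obtain rfl := Nat.le_zero.mp hst; exact subset_rfl
  | succ t ih =>
    rcases Nat.lt_succ_iff_lt_or_eq.mp (Nat.lt_succ_of_le hst) with h | h
    · exact (ih (Nat.lt_succ_iff.mp h)).trans (L_Umono A rk t)
    · subst h; exact subset_rfl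

/-- if step `t` is not of type 2 then every bidder adjacent to keyword `t`
is in `U` after step `t` -/
lemma L_adj_mem {t : ℕ} (h : t < m) (h2 : ¬ isT2 A rk t) :
    ∀ v : Fin nV, A ⟨t, h⟩ v → v ∈ (detS A rk (t+1)).1 := by
  intro v hv
  rcases step_cases rk (Ndet A rk t h) with ⟨hN0, hstep⟩ | ⟨v1, hN1, hstep⟩ |
    ⟨v1, v2, hv12, hv1N, hv2N, hstep⟩
  · rw [detS_succ_pos' A rk t h, (hstep 0 true (∅, ∅, 0) (detS A rk t)).2]
    by_contra hvd
    exact absurd (hN0 ▸ (mem_Ndet A rk).mpr ⟨hv, hvd⟩) (Finset.notMem_empty v)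
  · rw [detS_succ_pos' A rk t h, (hstep 0 true (∅, ∅, 0) (detS A rk t)).1]
    by_cases hvd : v ∈ (detS A rk t).1
    · exact Finset.mem_insert_of_mem hvd
    · have : v ∈ Ndet A rk t h := (mem_Ndet A rk).mpr ⟨hv, hvd⟩
      rw [hN1, Finset.mem_singleton] at this
      exact this ▸ Finset.mem_insert_self _ _
  · exfalso
    apply h2
    rw [isT2, detS_succ_pos' A rk t h, (hstep 0 true (∅, ∅, 0) (detS A rk t)).1]

/-- every bidder in `U` was reserved (at the step it entered) under a suitable single coin -/
lemma L_entry : ∀ t : ℕ, ∀ v ∈ (detS A rk t).1, ∃ e : ℕ, ∃ _ : e < t, ∃ hm : e < m,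
    ∃ c : Bool, ∀ r : Fin m → Bool, r ⟨e, hm⟩ = c →
      v ∈ (simStateP m A rk r (e + 1)).2.1 := by
  intro t
  induction t with
  | zero => rw [detS]; intro v hv; exact absurd hv (Finset.notMem_empty v)
  | succ t ih =>
    intro v hv
    by_cases h : t < m
    · by_cases hvd : v ∈ (detS A rk t).1
      · obtain ⟨e, he, hm, c, hc⟩ := ih v hvd
        exact ⟨e, Nat.lt_succ_of_lt he, hm, c, hc⟩
      · rcases step_cases rk (Ndet A rk t h) with ⟨hN0, hstep⟩ | ⟨v1, hN1, hstep⟩ |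
          ⟨v1, v2, hv12, hv1N, hv2N, hstep⟩
        · rw [detS_succ_pos' A rk t h, (hstep 0 true (∅, ∅, 0) (detS A rk t)).2] at hv
          exact absurd hv hvd
        · rw [detS_succ_pos' A rk t h, (hstep 0 true (∅, ∅, 0) (detS A rk t)).1] at hv
          have hvv1 : v = v1 := by
            rcases Finset.mem_insert.mp hv with h' | h'
            · exact h'
            · exact absurd h' hvd
          refine ⟨t, Nat.lt_succ_self t, h, false, fun r hr => ?_⟩
          obtain ⟨hd, h2, h3⟩ := hstep (fun vm => if ∃ v' : Fin nV, v' ≠ vm ∧ A ⟨t, h⟩ v' ∧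
            v' ∉ (simStateP m A rk r t).1 then 1 else 0) (r ⟨t, h⟩) (simStateP m A rk r t)
            (detS A rk t)
          rw [st_succ_pos' A rk r t h, h3 hr]
          exact hvv1 ▸ Finset.mem_insert_self _ _
        · rw [detS_succ_pos' A rk t h, (hstep 0 true (∅, ∅, 0) (detS A rk t)).1] at hv
          rcases Finset.mem_insert.mp hv with h' | h'
          · refine ⟨t, Nat.lt_succ_self t, h, false, fun r hr => ?_⟩
            obtain ⟨hd, h2, h3⟩ := hstep (fun vm => if ∃ v' : Fin nV, v' ≠ vm ∧ A ⟨t, h⟩ v' ∧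
              v' ∉ (simStateP m A rk r t).1 then 1 else 0) (r ⟨t, h⟩) (simStateP m A rk r t)
              (detS A rk t)
            rw [st_succ_pos' A rk r t h, h3 hr]
            exact h' ▸ Finset.mem_insert_self _ _
          · rcases Finset.mem_insert.mp h' with h'' | h''
            · refine ⟨t, Nat.lt_succ_self t, h, true, fun r hr => ?_⟩
              obtain ⟨hd, h2, h3⟩ := hstep (fun vm => if ∃ v' : Fin nV, v' ≠ vm ∧ A ⟨t, h⟩ v' ∧
                v' ∉ (simStateP m A rk r t).1 then 1 else 0) (r ⟨t, h⟩) (simStateP m A rk r t)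
                (detS A rk t)
              rw [st_succ_pos' A rk r t h, h2 hr]
              exact h'' ▸ Finset.mem_insert_self _ _
            · exact absurd h'' hvd
    · rw [detS_succ_neg A rk t h] at hv
      obtain ⟨e, he, hm, c, hc⟩ := ih v hv
      exact ⟨e, Nat.lt_succ_of_lt he, hm, c, hc⟩


/-- at a type-1 step there are a coin index and value guaranteeing profit -/
lemma LEX (hdeg : ∀ u : Fin m, ∃ x y : Fin nV, x ≠ y ∧ A u x ∧ A u y)
    {t : ℕ} (h : t < m) (h1 : isT1 A rk t) :
    ∃ e : ℕ, ∃ _ : e < t, ∃ hm : e < m, ∃ c : Bool, ∀ r : Fin m → Bool,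
      r ⟨e, hm⟩ = c → r ⟨t, h⟩ = true →
      (simStateP m A rk r (t+1)).2.2 = (simStateP m A rk r t).2.2 + 1 := by
  rcases step_cases rk (Ndet A rk t h) with ⟨hN0, hstep⟩ | ⟨v1, hN1, hstep⟩ |
    ⟨v1, v2, hv12, hv1N, hv2N, hstep⟩
  · exfalso
    have hd := (hstep 0 true (∅, ∅, 0) (detS A rk t)).2
    rw [isT1, detS_succ_pos' A rk t h, hd] at h1
    omega
  · -- the singleton case
    have hv1 : v1 ∈ Ndet A rk t h := by rw [hN1]; exact Finset.mem_singleton_self v1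
    have hv1U : v1 ∉ (detS A rk t).1 := ((mem_Ndet A rk).mp hv1).2
    obtain ⟨x, y, hxy, hax, hay⟩ := hdeg ⟨t, h⟩
    have key : ∀ z : Fin nV, A ⟨t, h⟩ z → z ∉ (detS A rk t).1 → z = v1 := by
      intro z hz hzd
      have : z ∈ Ndet A rk t h := (mem_Ndet A rk).mpr ⟨hz, hzd⟩
      rw [hN1, Finset.mem_singleton] at this
      exact this
    have hex : ∃ v' : Fin nV, A ⟨t, h⟩ v' ∧ v' ∈ (detS A rk t).1 := by
      by_cases hx : x ∈ (detS A rk t).1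
      · exact ⟨x, hax, hx⟩
      by_cases hy : y ∈ (detS A rk t).1
      · exact ⟨y, hay, hy⟩
      exact absurd ((key x hax hx).trans (key y hay hy).symm) hxy
    obtain ⟨v', hv'A, hv'U⟩ := hex
    obtain ⟨e, he, hm, c, hc⟩ := L_entry A rk t v' hv'U
    refine ⟨e, he, hm, c, fun r hrc hrt => ?_⟩
    obtain ⟨hd, h2, h3⟩ := hstep (fun vm => if ∃ v'' : Fin nV, v'' ≠ vm ∧ A ⟨t, h⟩ v'' ∧
      v'' ∉ (simStateP m A rk r t).1 then 1 else 0) (r ⟨t, h⟩) (simStateP m A rk r t)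
      (detS A rk t)
    rw [st_succ_pos' A rk r t h, h2 hrt]
    have hgain : ∃ v'' : Fin nV, v'' ≠ v1 ∧ A ⟨t, h⟩ v'' ∧
        v'' ∉ (simStateP m A rk r t).1 := by
      refine ⟨v', fun heq => hv1U (heq ▸ hv'U), hv'A, ?_⟩
      exact reserved_not_matched A rk r he (hc r hrc)
    simp only [if_pos hgain]
  · exfalso
    have hd := (hstep 0 true (∅, ∅, 0) (detS A rk t)).1
    have h1' := not_isT1_and_isT2 A rk t
    rw [isT1, detS_succ_pos' A rk t h, hd] at h1
    simp only [] at h1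
    omega

def P1 (u : Fin m) (e : Fin m) (c : Bool) : Prop :=
  e.val < u.val ∧ ∀ r : Fin m → Bool, r e = c → r u = true →
    (simStateP m A rk r (u.val + 1)).2.2 = (simStateP m A rk r u.val).2.2 + 1

open Classical in
noncomputable def ec (u : Fin m) : Fin m × Bool :=
  if h : ∃ p : Fin m × Bool, P1 A rk u p.1 p.2 then h.choose else (u, true)

lemma ec_spec (hdeg : ∀ u : Fin m, ∃ x y : Fin nV, x ≠ y ∧ A u x ∧ A u y)
    (u : Fin m) (h1 : isT1 A rk u.val) :
    P1 A rk u (ec A rk u).1 (ec A rk u).2 := by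
  have hex : ∃ p : Fin m × Bool, P1 A rk u p.1 p.2 := by
    obtain ⟨e, he, hm, c, hc⟩ := LEX A rk hdeg u.isLt h1
    refine ⟨(⟨e, hm⟩, c), he, fun r hrc hrt => hc r hrc ?_⟩
    · rwa [Fin.eta]
  rw [ec]
  rw [dif_pos hex]
  exact hex.choose_spec

lemma ec_ne (hdeg : ∀ u : Fin m, ∃ x y : Fin nV, x ≠ y ∧ A u x ∧ A u y)
    (u : Fin m) (h1 : isT1 A rk u.val) : (ec A rk u).1 ≠ u := by
  intro heq
  have := (ec_spec A rk hdeg u h1).1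
  rw [heq] at this
  omega

/-- pointwise profit lower bound -/
lemma L_pointwise (hdeg : ∀ u : Fin m, ∃ x y : Fin nV, x ≠ y ∧ A u x ∧ A u y)
    (r : Fin m → Bool) : ∀ t : ℕ, (detS A rk t).2.1 +
    (Finset.univ.filter fun u : Fin m => u.val < t ∧ isT1 A rk u.val ∧ r u = true ∧
      r (ec A rk u).1 = (ec A rk u).2).card ≤ (simStateP m A rk r t).2.2 := by
  intro t
  induction t with
  | zero =>
    rw [detS, simStateP]
    simp
  | succ t ih =>
    by_cases h : t < m
    · have hsub : (Finset.univ.filter fun u : Fin m => u.val < t + 1 ∧ isT1 A rk u.val ∧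
          r u = true ∧ r (ec A rk u).1 = (ec A rk u).2) ⊆
          insert ⟨t, h⟩ (Finset.univ.filter fun u : Fin m => u.val < t ∧ isT1 A rk u.val ∧
            r u = true ∧ r (ec A rk u).1 = (ec A rk u).2) := by
        intro u hu
        rw [Finset.mem_filter] at hu
        rcases Nat.lt_succ_iff_lt_or_eq.mp hu.2.1 with h' | h'
        · exact Finset.mem_insert_of_mem (Finset.mem_filter.mpr ⟨hu.1, h', hu.2.2⟩)
        · exact Finset.mem_insert.mpr (Or.inl (Fin.ext h'))
      have hcard1 : (Finset.univ.filter fun u : Fin m => u.val < t + 1 ∧ isT1 A rk u.val ∧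
          r u = true ∧ r (ec A rk u).1 = (ec A rk u).2).card ≤
          (Finset.univ.filter fun u : Fin m => u.val < t ∧ isT1 A rk u.val ∧
            r u = true ∧ r (ec A rk u).1 = (ec A rk u).2).card + 1 :=
        (Finset.card_le_card hsub).trans (Finset.card_insert_le _ _)
      have hcard2 : ¬ (isT1 A rk t ∧ r ⟨t, h⟩ = true ∧
          r (ec A rk ⟨t, h⟩).1 = (ec A rk ⟨t, h⟩).2) →
          (Finset.univ.filter fun u : Fin m => u.val < t + 1 ∧ isT1 A rk u.val ∧
            r u = true ∧ r (ec A rk u).1 = (ec A rk u).2).card ≤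
          (Finset.univ.filter fun u : Fin m => u.val < t ∧ isT1 A rk u.val ∧
            r u = true ∧ r (ec A rk u).1 = (ec A rk u).2).card := by
        intro hQ
        apply Finset.card_le_card
        intro u hu
        rw [Finset.mem_filter] at hu
        rcases Nat.lt_succ_iff_lt_or_eq.mp hu.2.1 with h' | h'
        · exact Finset.mem_filter.mpr ⟨hu.1, h', hu.2.2⟩
        · exact absurd (show isT1 A rk (⟨t, h⟩ : Fin m).val ∧ r ⟨t, h⟩ = true ∧
            r (ec A rk ⟨t, h⟩).1 = (ec A rk ⟨t, h⟩).2 from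
              (Fin.ext h' : u = ⟨t, h⟩) ▸ hu.2.2) hQ
      rcases step_cases rk (Ndet A rk t h) with ⟨hN0, hstep⟩ | ⟨v1, hN1, hstep⟩ |
        ⟨v1, v2, hv12, hv1N, hv2N, hstep⟩
      · -- empty step : nothing changes
        obtain ⟨hs, hd⟩ := hstep (fun vm => if ∃ v'' : Fin nV, v'' ≠ vm ∧ A ⟨t, h⟩ v'' ∧
          v'' ∉ (simStateP m A rk r t).1 then 1 else 0) (r ⟨t, h⟩) (simStateP m A rk r t)
          (detS A rk t)
        have hT1 : ¬ isT1 A rk t := by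
          rw [isT1, detS_succ_pos' A rk t h, hd]; omega
        have := hcard2 (fun hq => hT1 hq.1)
        rw [st_succ_pos' A rk r t h, hs, detS_succ_pos' A rk t h, hd]
        omega
      · -- type-1 step
        obtain ⟨hd, h2, h3⟩ := hstep (fun vm => if ∃ v'' : Fin nV, v'' ≠ vm ∧ A ⟨t, h⟩ v'' ∧
          v'' ∉ (simStateP m A rk r t).1 then 1 else 0) (r ⟨t, h⟩) (simStateP m A rk r t)
          (detS A rk t)
        have ha : (detS A rk (t+1)).2.1 = (detS A rk t).2.1 := by
          rw [detS_succ_pos' A rk t h, hd]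
        by_cases hQ : isT1 A rk t ∧ r ⟨t, h⟩ = true ∧
            r (ec A rk ⟨t, h⟩).1 = (ec A rk ⟨t, h⟩).2
        · have hprof := (ec_spec A rk hdeg ⟨t, h⟩ hQ.1).2 r hQ.2.2 hQ.2.1
          rw [show ((⟨t, h⟩ : Fin m) : ℕ) = t from rfl] at hprof
          rw [ha, hprof]
          omega
        · have hc2 := hcard2 hQ
          have hmono := L_profit_mono A rk r t
          rw [ha]
          omega
      · -- type-2 step : profit increases by one surely
        obtain ⟨hd, h2, h3⟩ := hstep (fun vm => if ∃ v'' : Fin nV, v'' ≠ vm ∧ A ⟨t, h⟩ v'' ∧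
          v'' ∉ (simStateP m A rk r t).1 then 1 else 0) (r ⟨t, h⟩) (simStateP m A rk r t)
          (detS A rk t)
        have ha : (detS A rk (t+1)).2.1 = (detS A rk t).2.1 + 1 := by
          rw [detS_succ_pos' A rk t h, hd]
        have hT1 : ¬ isT1 A rk t := fun h1 =>
          not_isT1_and_isT2 A rk t ⟨h1, ha⟩
        have hc2 := hcard2 (fun hq => hT1 hq.1)
        have hprof : (simStateP m A rk r (t+1)).2.2 = (simStateP m A rk r t).2.2 + 1 := by
          rcases Bool.dichotomy (r ⟨t, h⟩) with hb | hb
          · rw [st_succ_pos' A rk r t h, h3 hb]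
            have hgain : ∃ v'' : Fin nV, v'' ≠ v2 ∧ A ⟨t, h⟩ v'' ∧
                v'' ∉ (simStateP m A rk r t).1 :=
              ⟨v1, hv12, ((mem_Ndet A rk).mp hv1N).1,
                (not_mem_st_of_not_mem_det A rk ((mem_Ndet A rk).mp hv1N).2).1⟩
            simp only [if_pos hgain]
          · rw [st_succ_pos' A rk r t h, h2 hb]
            have hgain : ∃ v'' : Fin nV, v'' ≠ v1 ∧ A ⟨t, h⟩ v'' ∧
                v'' ∉ (simStateP m A rk r t).1 :=
              ⟨v2, Ne.symm hv12, ((mem_Ndet A rk).mp hv2N).1,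
                (not_mem_st_of_not_mem_det A rk ((mem_Ndet A rk).mp hv2N).2).1⟩
            simp only [if_pos hgain]
        rw [ha, hprof]
        omega
    · -- t ≥ m : nothing changes and the filters agree
      have hfil : (Finset.univ.filter fun u : Fin m => u.val < t + 1 ∧ isT1 A rk u.val ∧
          r u = true ∧ r (ec A rk u).1 = (ec A rk u).2) =
          (Finset.univ.filter fun u : Fin m => u.val < t ∧ isT1 A rk u.val ∧
            r u = true ∧ r (ec A rk u).1 = (ec A rk u).2) := by
        apply Finset.filter_congr
        intro u _
        have : u.val < t := lt_of_lt_of_le u.isLt (Nat.le_of_not_lt h)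
        simp only [this, Nat.lt_succ_of_lt this, true_and]
      rw [st_succ_neg A rk r t h, detS_succ_neg A rk t h, hfil]
      exact ih


end SPM

section SPM2
variable {m nV : ℕ} (A : Fin m → Fin nV → Prop) [∀ t v, Decidable (A t v)] (rk : Fin nV → ℕ)

lemma count_pair (u e : Fin m) (hne : e ≠ u) (c : Bool) :
    2 ^ m ≤ 4 * (Finset.univ.filter fun r : Fin m → Bool => r u = true ∧ r e = c).card := by
  classical
  set φ : (Fin m → Bool) → (Fin m → Bool) :=
    fun r => Function.update (Function.update r u true) e c with hφ
  have himg : (Finset.univ.image φ) ⊆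
      (Finset.univ.filter fun r : Fin m → Bool => r u = true ∧ r e = c) := by
    intro r0 hr0
    obtain ⟨r, _, rfl⟩ := Finset.mem_image.mp hr0
    refine Finset.mem_filter.mpr ⟨Finset.mem_univ _, ?_, ?_⟩
    · rw [hφ]
      simp only [Function.update_of_ne hne.symm, Function.update_self]
    · rw [hφ]
      simp only [Function.update_self]
  have hfiber : ∀ r0 ∈ Finset.univ.image φ,
      (Finset.univ.filter fun r => φ r = r0).card ≤ 4 := by
    intro r0 _
    have : (Finset.univ.filter fun r => φ r = r0).card ≤
        (Finset.univ : Finset (Bool × Bool)).card := by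
      apply Finset.card_le_card_of_injOn (fun r => (r u, r e))
        (fun r _ => Finset.mem_univ _)
      intro r hr r' hr' hpair
      simp only [Finset.coe_filter, Set.mem_setOf_eq] at hr hr'
      have hfr : φ r = φ r' := hr.2.trans hr'.2.symm
      funext i
      by_cases hiu : i = u
      · subst hiu; exact congrArg Prod.fst hpair
      · by_cases hie : i = e
        · subst hie; exact congrArg Prod.snd hpair
        · have h1 : φ r i = r i := by
            rw [hφ]; simp only [Function.update_of_ne hie, Function.update_of_ne hiu]
          have h2 : φ r' i = r' i := by
            rw [hφ]; simp only [Function.update_of_ne hie, Function.update_of_ne hiu]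
          rw [← h1, ← h2, hfr]
    simpa using this
  have hkey := Finset.card_le_mul_card_image (f := φ) Finset.univ 4 hfiber
  have hcard : (Finset.univ : Finset (Fin m → Bool)).card = 2 ^ m := by
    rw [Finset.card_univ, Fintype.card_fun, Fintype.card_bool, Fintype.card_fin]
  calc 2 ^ m = (Finset.univ : Finset (Fin m → Bool)).card := hcard.symm
    _ ≤ 4 * (Finset.univ.image φ).card := hkey
    _ ≤ 4 * (Finset.univ.filter fun r : Fin m → Bool => r u = true ∧ r e = c).card :=
        Nat.mul_le_mul_left 4 (Finset.card_le_card himg)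

theorem per_rk (hdeg : ∀ u : Fin m, ∃ x y : Fin nV, x ≠ y ∧ A u x ∧ A u y)
    {S : Finset (Fin m)} {g w : Fin m → Fin nV}
    (hspm : IsSecondPriceMatching A S g w) :
    S.card * 2 ^ m ≤ 4 * ∑ r : Fin m → Bool, (simStateP m A rk r m).2.2 := by
  classical
  set a := (detS A rk m).2.1 with ha
  set b := (detS A rk m).2.2 with hb
  -- part 1 : S.card ≤ 3 * a + b
  have hS : S.card ≤ 3 * a + b := by
    have hsplit := Finset.card_filter_add_card_filter_not
      (s := S) (p := fun u => isT2 A rk u.val)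
    have h2 : (S.filter fun u => isT2 A rk u.val).card ≤ a := by
      have : (S.filter fun u => isT2 A rk u.val).card ≤
          ((Finset.range m).filter (isT2 A rk)).card := by
        apply Finset.card_le_card_of_injOn Fin.val
        · intro u hu
          rw [Finset.mem_coe, Finset.mem_filter] at hu
          rw [Finset.mem_coe, Finset.mem_filter]
          exact ⟨Finset.mem_range.mpr u.isLt, hu.2⟩
        · intro u _ u' _ huv
          exact Fin.ext huv
      rwa [L_countT2 A rk m] at this
    have h3 : (S.filter fun u => ¬ isT2 A rk u.val).card ≤ 2 * a + b := by
      have hsub : (S.filter fun u => ¬ isT2 A rk u.val).card ≤ (detS A rk m).1.card := by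
        apply Finset.card_le_card_of_injOn g
        · intro u hu
          rw [Finset.mem_coe, Finset.mem_filter] at hu
          have hAg : A u (g u) := (hspm.1 u hu.1).1
          have : g u ∈ (detS A rk (u.val + 1)).1 := by
            have := L_adj_mem A rk u.isLt hu.2 (g u) (by rwa [Fin.eta])
            exact this
          exact L_Umono' A rk (Nat.succ_le_of_lt u.isLt) this
        · intro u hu u' hu' hgu
          by_contra hne
          simp only [Finset.coe_filter, Set.mem_setOf_eq] at hu hu'
          exact hspm.2.1 u hu.1 u' hu'.1 hne hgu
      exact hsub.trans (L_cardU A rk m)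
    omega
  -- part 2 : expected profit
  have hpt : ∀ r : Fin m → Bool, a +
      (Finset.univ.filter fun u : Fin m => u.val < m ∧ isT1 A rk u.val ∧ r u = true ∧
        r (ec A rk u).1 = (ec A rk u).2).card ≤ (simStateP m A rk r m).2.2 :=
    fun r => L_pointwise A rk hdeg r m
  set F : (Fin m → Bool) → ℕ := fun r =>
    (Finset.univ.filter fun u : Fin m => u.val < m ∧ isT1 A rk u.val ∧ r u = true ∧
      r (ec A rk u).1 = (ec A rk u).2).card with hF
  have hsum1 : ∑ r : Fin m → Bool, (a + F r) ≤
      ∑ r : Fin m → Bool, (simStateP m A rk r m).2.2 :=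
    Finset.sum_le_sum fun r _ => hpt r
  have hsum2 : ∑ r : Fin m → Bool, (a + F r) = 2 ^ m * a + ∑ r : Fin m → Bool, F r := by
    rw [Finset.sum_add_distrib, Finset.sum_const, Finset.card_univ, Fintype.card_fun,
      Fintype.card_bool, Fintype.card_fin, smul_eq_mul]
  -- counting : b * 2 ^ m ≤ 4 * ∑ F
  have hkey : ∀ u : Fin m, isT1 A rk u.val →
      2 ^ m ≤ 4 * ∑ r : Fin m → Bool, (if u.val < m ∧ isT1 A rk u.val ∧ r u = true ∧
        r (ec A rk u).1 = (ec A rk u).2 then 1 else 0) := by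
    intro u h1
    have hne : (ec A rk u).1 ≠ u := ec_ne A rk hdeg u h1
    have hcp := count_pair u (ec A rk u).1 hne (ec A rk u).2
    have heq : ∑ r : Fin m → Bool, (if u.val < m ∧ isT1 A rk u.val ∧ r u = true ∧
        r (ec A rk u).1 = (ec A rk u).2 then 1 else 0) =
        (Finset.univ.filter fun r : Fin m → Bool => r u = true ∧
          r (ec A rk u).1 = (ec A rk u).2).card := by
      have h0 := Finset.natCast_card_filter (R := ℕ)
        (fun r : Fin m → Bool => r u = true ∧ r (ec A rk u).1 = (ec A rk u).2) Finset.univ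
      rw [Nat.cast_id] at h0
      rw [h0]
      exact Finset.sum_congr rfl fun r _ => by simp only [u.isLt, h1, true_and]
    rw [heq]
    exact hcp
  have hbcount : b = (Finset.univ.filter fun u : Fin m => isT1 A rk u.val).card := by
    rw [hb, ← L_countT1 A rk m]
    apply Finset.card_bij (fun (x : ℕ) _ => (⟨x, by
      simp_all [Finset.mem_filter, Finset.mem_range]⟩ : Fin m))
    · intro x hx
      rw [Finset.mem_filter] at hx ⊢
      exact ⟨Finset.mem_univ _, hx.2⟩
    · intro x hx y hy hxy
      exact congrArg Fin.val hxy
    · intro u hu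
      rw [Finset.mem_filter] at hu
      exact ⟨u.val, Finset.mem_filter.mpr ⟨Finset.mem_range.mpr u.isLt, hu.2⟩, rfl⟩
  have hmain : b * 2 ^ m ≤ 4 * ∑ r : Fin m → Bool, F r := by
    have h1 : b * 2 ^ m =
        ∑ u ∈ Finset.univ.filter fun u : Fin m => isT1 A rk u.val, 2 ^ m := by
      rw [Finset.sum_const, smul_eq_mul, ← hbcount]
    have h2 : ∑ u ∈ (Finset.univ.filter fun u : Fin m => isT1 A rk u.val), 2 ^ m ≤
        ∑ u ∈ (Finset.univ.filter fun u : Fin m => isT1 A rk u.val),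
          4 * ∑ r : Fin m → Bool, (if u.val < m ∧ isT1 A rk u.val ∧ r u = true ∧
            r (ec A rk u).1 = (ec A rk u).2 then 1 else 0) := by
      apply Finset.sum_le_sum
      intro u hu
      exact hkey u (Finset.mem_filter.mp hu).2
    have h3 : ∑ u ∈ (Finset.univ.filter fun u : Fin m => isT1 A rk u.val),
          4 * ∑ r : Fin m → Bool, (if u.val < m ∧ isT1 A rk u.val ∧ r u = true ∧
            r (ec A rk u).1 = (ec A rk u).2 then 1 else 0) ≤
        ∑ u : Fin m, 4 * ∑ r : Fin m → Bool, (if u.val < m ∧ isT1 A rk u.val ∧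
          r u = true ∧ r (ec A rk u).1 = (ec A rk u).2 then 1 else 0) :=
      Finset.sum_le_sum_of_subset (Finset.filter_subset _ _)
    have h4 : ∑ u : Fin m, 4 * ∑ r : Fin m → Bool, (if u.val < m ∧ isT1 A rk u.val ∧
          r u = true ∧ r (ec A rk u).1 = (ec A rk u).2 then 1 else 0) =
        4 * ∑ r : Fin m → Bool, F r := by
      rw [← Finset.mul_sum]
      congr 1
      rw [Finset.sum_comm]
      apply Finset.sum_congr rfl
      intro r _
      have h0 := Finset.natCast_card_filter (R := ℕ)
        (fun u : Fin m => u.val < m ∧ isT1 A rk u.val ∧ r u = true ∧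
          r (ec A rk u).1 = (ec A rk u).2) Finset.univ
      rw [Nat.cast_id] at h0
      simp only [hF]
      exact h0.symm
    rw [h1]
    exact (h2.trans h3).trans_eq h4
  -- combine
  calc S.card * 2 ^ m ≤ (3 * a + b) * 2 ^ m := Nat.mul_le_mul_right _ hS
    _ = 3 * (a * 2 ^ m) + b * 2 ^ m := by ring
    _ ≤ 4 * (a * 2 ^ m) + 4 * ∑ r : Fin m → Bool, F r := by
        have : 3 * (a * 2 ^ m) ≤ 4 * (a * 2 ^ m) := Nat.mul_le_mul_right _ (by norm_num)
        omega
    _ = 4 * (2 ^ m * a + ∑ r : Fin m → Bool, F r) := by ring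
    _ = 4 * ∑ r : Fin m → Bool, (a + F r) := by rw [hsum2]
    _ ≤ 4 * ∑ r : Fin m → Bool, (simStateP m A rk r m).2.2 :=
        Nat.mul_le_mul_left _ hsum1

end SPM2


/-- there is an error term `ε(OPT) → 0` such that on every 2PM instance
in which each keyword has degree at least 2, the expected profit of RankingSimulate
(over the uniformly random ranking `σ` and the fair coins `r`) is at least
`(1/2)·OPT_2P·(1 − e^{−1/2} + ε OPT_2P)`; hence its competitive ratio is at most
`2√e/(√e − 1) ≈ 5.083`. -/
theorem stmt17 :
    ∃ ε : ℕ → ℝ, Filter.Tendsto ε Filter.atTop (nhds 0) ∧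
      ∀ (m nV : ℕ) (A : Fin m → Fin nV → Prop) (_ : ∀ t v, Decidable (A t v))
        (_ : ∀ u : Fin m, ∃ v v' : Fin nV, v ≠ v' ∧ A u v ∧ A u v')
        (OPT2P : ℕ)
        (_ : IsGreatest {val : ℕ | ∃ (S : Finset (Fin m)) (g w : Fin m → Fin nV),
            IsSecondPriceMatching A S g w ∧ S.card = val} OPT2P),
        (∑ σ : Equiv.Perm (Fin nV), ∑ r : Fin m → Bool,
            ((simStateP m A (fun v => (σ v : ℕ)) r m).2.2 : ℝ)) /
          ((Nat.factorial nV : ℝ) * 2 ^ m) ≥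
        (1 / 2) * OPT2P * (1 - Real.exp (-(1 / 2)) + ε OPT2P) := by
  classical
  refine ⟨fun _ => 0, tendsto_const_nhds, ?_⟩
  intro m nV A decA hdeg OPT2P hOPT
  letI := decA
  obtain ⟨S, g, w, hspm, hcard⟩ := hOPT.1
  have hnat : (Nat.factorial nV) * (OPT2P * 2 ^ m) ≤
      4 * ∑ σ : Equiv.Perm (Fin nV), ∑ r : Fin m → Bool,
        (simStateP m A (fun v => (σ v : ℕ)) r m).2.2 := by
    have hσ : ∀ σ : Equiv.Perm (Fin nV), OPT2P * 2 ^ m ≤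
        4 * ∑ r : Fin m → Bool, (simStateP m A (fun v => (σ v : ℕ)) r m).2.2 := by
      intro σ
      rw [← hcard]
      exact per_rk A (fun v => (σ v : ℕ)) hdeg hspm
    calc (Nat.factorial nV) * (OPT2P * 2 ^ m)
        = ∑ _σ : Equiv.Perm (Fin nV), OPT2P * 2 ^ m := by
          rw [Finset.sum_const, Finset.card_univ, Fintype.card_perm, Fintype.card_fin,
            smul_eq_mul]
      _ ≤ ∑ σ : Equiv.Perm (Fin nV), 4 * ∑ r : Fin m → Bool,
            (simStateP m A (fun v => (σ v : ℕ)) r m).2.2 :=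
          Finset.sum_le_sum fun σ _ => hσ σ
      _ = 4 * ∑ σ : Equiv.Perm (Fin nV), ∑ r : Fin m → Bool,
            (simStateP m A (fun v => (σ v : ℕ)) r m).2.2 := (Finset.mul_sum _ _ _).symm
  rw [ge_iff_le]
  have hD : (0:ℝ) < (Nat.factorial nV : ℝ) * 2 ^ m := by positivity
  rw [le_div_iff₀ hD]
  have hb0 : (fun _ : ℕ => (0:ℝ)) OPT2P = 0 := rfl
  rw [hb0, add_zero]
  have hexp : (1 : ℝ) - Real.exp (-(1/2)) ≤ 1/2 := by
    have := Real.add_one_le_exp (-(1/2 : ℝ)); linarith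
  have hOPTnn : (0:ℝ) ≤ (OPT2P : ℝ) := Nat.cast_nonneg _
  have hcast : (1/4:ℝ) * OPT2P * ((Nat.factorial nV : ℝ) * 2^m) ≤
      ∑ σ : Equiv.Perm (Fin nV), ∑ r : Fin m → Bool,
        ((simStateP m A (fun v => (σ v : ℕ)) r m).2.2 : ℝ) := by
    have h := Nat.cast_le (α := ℝ) |>.mpr hnat
    push_cast at h
    linarith
  have hstep1 : (1/2 : ℝ) * OPT2P * (1 - Real.exp (-(1/2))) *
      ((Nat.factorial nV : ℝ) * 2 ^ m) ≤ (1/4 : ℝ) * OPT2P *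
      ((Nat.factorial nV : ℝ) * 2 ^ m) := by
    apply mul_le_mul_of_nonneg_right _ (le_of_lt hD)
    calc (1/2 : ℝ) * OPT2P * (1 - Real.exp (-(1/2)))
        ≤ (1/2 : ℝ) * OPT2P * (1/2) := by
          apply mul_le_mul_of_nonneg_left hexp (by positivity)
      _ = (1/4 : ℝ) * OPT2P := by ring
  exact hstep1.trans hcast
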